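/- arXiv:1903.01459 — 5 statements merged into one kernel-verified Lean document; each statement's English description precedes it below -/
import Mathlib

section
/- Identification of nonparametric regression curves under the normalization constraint (analytic core of Proposition 1): Let X be a real random variable on a probability space, taking values in [0,1], whose law has a density f with respect to Lebesgue measure satisfying f(x) ≥ c for Lebesgue-almost every x ∈ [0,1], for some constant c > 0. Let m, m̃ : [0,1] → ℝ be continuous functions, and let U, Ũ be integrable real random variables with E[U | X] = 0 almost surely and E[Ũ | X] = 0 almost surely. If m(X) + U = m̃(X) + Ũ almost surely, then m(x) = m̃(x) for all x ∈ [0,1]. -/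
open MeasureTheory

/-- **Identification of nonparametric regression curves (analytic core of Proposition 1).**
Let `X` be a random variable with values in `[0,1]` whose law has a Lebesgue density `f`
bounded below by `c > 0` a.e. on `[0,1]`. If `m, m'` are continuous on `[0,1]`, `U, U'` are
integrable with `E[U | X] = 0` and `E[U' | X] = 0` a.s., and `m(X) + U = m'(X) + U'` a.s.,
then `m = m'` on all of `[0,1]`. -/
theorem identification_of_regression_curves
    {Ω : Type*} [MeasurableSpace Ω] (μ : Measure Ω) [IsProbabilityMeasure μ]
    (X : Ω → ℝ) (hX : Measurable X) (hXrange : ∀ ω, X ω ∈ Set.Icc (0 : ℝ) 1)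
    (f : ℝ → ℝ) (c : ℝ) (hc : 0 < c)
    (hdens : Measure.map X μ = volume.withDensity (fun x => ENNReal.ofReal (f x)))
    (hlb : ∀ᵐ x ∂(volume.restrict (Set.Icc (0 : ℝ) 1)), c ≤ f x)
    (m m' : ℝ → ℝ)
    (hm : ContinuousOn m (Set.Icc (0 : ℝ) 1)) (hm' : ContinuousOn m' (Set.Icc (0 : ℝ) 1))
    (U U' : Ω → ℝ) (hU : Integrable U μ) (hU' : Integrable U' μ)
    (hcondU : μ[U | MeasurableSpace.comap X Real.measurableSpace] =ᵐ[μ] 0)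
    (hcondU' : μ[U' | MeasurableSpace.comap X Real.measurableSpace] =ᵐ[μ] 0)
    (heq : ∀ᵐ ω ∂μ, m (X ω) + U ω = m' (X ω) + U' ω) :
    ∀ x ∈ Set.Icc (0 : ℝ) 1, m x = m' x := by
  classical
  -- projection onto [0,1]
  set π : ℝ → ℝ := fun x => max 0 (min x 1) with hπdef
  have hπcont : Continuous π := continuous_const.max (continuous_id.min continuous_const)
  have hπrange : ∀ x, π x ∈ Set.Icc (0 : ℝ) 1 := by
    intro x
    exact ⟨le_max_left _ _, max_le (by norm_num) (min_le_right _ _)⟩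
  have hπid : ∀ x ∈ Set.Icc (0 : ℝ) 1, π x = x := by
    intro x hx
    simp [hπdef, min_eq_left hx.2, max_eq_right, hx.1]
  -- globally continuous version of m - m'
  set G : ℝ → ℝ := fun x => m (π x) - m' (π x) with hGdef
  have hGcont : Continuous G :=
    (hm.comp_continuous hπcont hπrange).sub (hm'.comp_continuous hπcont hπrange)
  have hGX : ∀ ω, G (X ω) = m (X ω) - m' (X ω) := by
    intro ω
    simp [hGdef, hπid _ (hXrange ω)]
  -- G ∘ X is bounded, hence integrable
  have hbd : ∃ C, ∀ x, |G x| ≤ C := by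
    obtain ⟨C, hC⟩ := isCompact_Icc.exists_bound_of_continuousOn
      (hGcont.continuousOn (s := Set.Icc (0:ℝ) 1))
    refine ⟨C, fun x => ?_⟩
    have : G x = G (π x) := by simp [hGdef, hπid _ (hπrange x), hπid]
    rw [this]
    exact hC _ (hπrange x)
  obtain ⟨C, hC⟩ := hbd
  have hGXint : Integrable (fun ω => G (X ω)) μ := by
    refine Integrable.mono' (integrable_const C) ((hGcont.measurable.comp hX).aestronglyMeasurable) ?_
    filter_upwards with ω
    exact hC _
  -- comap measurability
  have hXcomap : @Measurable Ω ℝ (MeasurableSpace.comap X Real.measurableSpace) _ X :=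
    fun s hs => ⟨s, hs, rfl⟩
  have hle : MeasurableSpace.comap X Real.measurableSpace ≤ ‹MeasurableSpace Ω› :=
    hX.comap_le
  have hsm : StronglyMeasurable[MeasurableSpace.comap X Real.measurableSpace]
      (fun ω => G (X ω)) :=
    (hGcont.measurable.comp hXcomap).stronglyMeasurable
  -- conditional expectation argument
  have hGXeq : (fun ω => G (X ω)) =ᵐ[μ] fun ω => U' ω - U ω := by
    filter_upwards [heq] with ω hω
    rw [hGX ω]; linarith
  have hcond1 : μ[fun ω => G (X ω) | MeasurableSpace.comap X Real.measurableSpace]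
      =ᵐ[μ] fun ω => G (X ω) :=
    Filter.EventuallyEq.of_eq (condExp_of_stronglyMeasurable hle hsm hGXint)
  have hcond2 : μ[fun ω => G (X ω) | MeasurableSpace.comap X Real.measurableSpace]
      =ᵐ[μ] 0 := by
    have h1 : μ[fun ω => G (X ω) | MeasurableSpace.comap X Real.measurableSpace]
        =ᵐ[μ] μ[fun ω => U' ω - U ω | MeasurableSpace.comap X Real.measurableSpace] :=
      condExp_congr_ae hGXeq
    have h2 : μ[fun ω => U' ω - U ω | MeasurableSpace.comap X Real.measurableSpace]
        =ᵐ[μ] fun ω => (μ[U' | MeasurableSpace.comap X Real.measurableSpace]) ω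
          - (μ[U | MeasurableSpace.comap X Real.measurableSpace]) ω :=
      condExp_sub hU' hU (MeasurableSpace.comap X Real.measurableSpace)
    refine h1.trans (h2.trans ?_)
    filter_upwards [hcondU, hcondU'] with ω h1 h2
    simp [h1, h2]
  have hGX0 : ∀ᵐ ω ∂μ, G (X ω) = 0 := hcond1.symm.trans hcond2
  -- push to the law of X
  have hmap : ∀ᵐ x ∂(Measure.map X μ), G x = 0 := by
    rw [ae_map_iff hX.aemeasurable]
    · exact hGX0
    · exact hGcont.measurable (measurableSet_singleton 0)
  rw [hdens] at hmap
  -- the bad set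
  set N : Set ℝ := {x | G x ≠ 0} with hNdef
  have hNmeas : MeasurableSet N :=
    (hGcont.measurable (measurableSet_singleton 0)).compl
  have hNnull : (volume.withDensity (fun x => ENNReal.ofReal (f x))) N = 0 := hmap
  -- Lebesgue measure of N ∩ [0,1] is zero
  have hvolN : volume (N ∩ Set.Icc (0:ℝ) 1) = 0 := by
    by_contra hpos
    have hpos' : 0 < volume (N ∩ Set.Icc (0:ℝ) 1) := pos_iff_ne_zero.mpr hpos
    have h1 : (volume.withDensity (fun x => ENNReal.ofReal (f x))) (N ∩ Set.Icc (0:ℝ) 1)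
        ≤ 0 := hNnull ▸ measure_mono Set.inter_subset_left
    have h2 : (volume.withDensity (fun x => ENNReal.ofReal (f x))) (N ∩ Set.Icc (0:ℝ) 1)
        = ∫⁻ x in N ∩ Set.Icc (0:ℝ) 1, ENNReal.ofReal (f x) :=
      withDensity_apply _ (hNmeas.inter measurableSet_Icc)
    have h3 : ENNReal.ofReal c * volume (N ∩ Set.Icc (0:ℝ) 1)
        ≤ ∫⁻ x in N ∩ Set.Icc (0:ℝ) 1, ENNReal.ofReal (f x) := by
      rw [← setLIntegral_const]
      refine setLIntegral_mono_ae' (hNmeas.inter measurableSet_Icc) ?_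
      filter_upwards [ae_imp_of_ae_restrict hlb] with x hx hxN
      exact ENNReal.ofReal_le_ofReal (hx hxN.2)
    have : 0 < ENNReal.ofReal c * volume (N ∩ Set.Icc (0:ℝ) 1) :=
      ENNReal.mul_pos (by simpa using hc) hpos
    rw [← h2] at h3
    exact absurd (lt_of_lt_of_le this (le_trans h3 h1)) (lt_irrefl 0)
  -- continuity: G vanishes everywhere on [0,1]
  intro x hx
  by_contra hne
  have hGx : G x ≠ 0 := by
    rw [hGdef]
    simp only [hπid x hx]
    exact sub_ne_zero.mpr hne
  have hopen : IsOpen N := isOpen_compl_iff.mpr (isClosed_singleton.preimage hGcont)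
  obtain ⟨ε, hε, hball⟩ := Metric.isOpen_iff.mp hopen x hGx
  set a : ℝ := max 0 (x - ε/2)
  set b : ℝ := min 1 (x + ε/2)
  have hab : a < b := by
    have h1 : (0:ℝ) < min 1 (x + ε/2) := lt_min (by norm_num) (by nlinarith [hx.1])
    have h2 : x - ε/2 < min 1 (x + ε/2) := lt_min (by nlinarith [hx.2]) (by linarith)
    exact max_lt h1 h2
  have hsub : Set.Ioo a b ⊆ N ∩ Set.Icc (0:ℝ) 1 := by
    intro y hy
    constructor
    · apply hball
      rw [Metric.mem_ball, Real.dist_eq, abs_lt]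
      constructor
      · have : x - ε/2 ≤ a := le_max_right _ _
        have : x - ε/2 < y := lt_of_le_of_lt this hy.1
        linarith
      · have : b ≤ x + ε/2 := min_le_right _ _
        have : y < x + ε/2 := lt_of_lt_of_le hy.2 this
        linarith
    · exact ⟨le_of_lt (lt_of_le_of_lt (le_max_left _ _) hy.1),
        le_of_lt (lt_of_lt_of_le hy.2 (min_le_left _ _))⟩
  have : volume (Set.Ioo a b) = 0 :=
    le_antisymm (hvolN ▸ measure_mono hsub) zero_le
  rw [Real.volume_Ioo] at this
  exact absurd this (by simp [ENNReal.ofReal_eq_zero]; linarith)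
end

section
/- Deterministic core of Theorem 1(a) (exact recovery by complete-linkage HAC under separation): Let n ≥ 1 be an integer, d : {1,…,n}² → ℝ symmetric, and let {G₁,…,G_{K₀}} be a partition of {1,…,n} into K₀ nonempty groups that is d-separated. Then, for every choice of tie-breaking at each step, the HAC partition P^{n−K₀} into K₀ clusters satisfies P^{n−K₀} = {G₁,…,G_{K₀}}. -/
open Finset

/-- Complete-linkage dissimilarity `Δ(S,S') = max_{i ∈ S, j ∈ S'} d i j`, as an
extended real (so that the value over an empty index set is `⊥`). -/
noncomputable def cLink {n : ℕ} (d : Fin n → Fin n → ℝ) (S S' : Finset (Fin n)) : EReal :=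
  sSup {x : EReal | ∃ i ∈ S, ∃ j ∈ S', x = (d i j : EReal)}

/-- Within-cluster dissimilarity `Δ(C) = max_{i,j ∈ C, i ≠ j} d i j`, as an extended real;
for a singleton (or empty) cluster the value is `⊥`, which is smaller than every real. -/
noncomputable def cDiam {n : ℕ} (d : Fin n → Fin n → ℝ) (C : Finset (Fin n)) : EReal :=
  sSup {x : EReal | ∃ i ∈ C, ∃ j ∈ C, i ≠ j ∧ x = (d i j : EReal)}

/-- The initial partition of `{1,…,n}` into `n` singleton clusters. -/
def singletonPartition (n : ℕ) : Finset (Finset (Fin n)) :=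
  Finset.univ.image fun i : Fin n => ({i} : Finset (Fin n))

/-- `Q` is obtained from `P` by merging one pair of distinct clusters attaining the
minimum of the complete-linkage dissimilarity `Δ` over all pairs of distinct clusters. -/
def IsMergeStep {n : ℕ} (d : Fin n → Fin n → ℝ) (P Q : Finset (Finset (Fin n))) : Prop :=
  ∃ C ∈ P, ∃ C' ∈ P, C ≠ C' ∧
    (∀ D ∈ P, ∀ D' ∈ P, D ≠ D' → cLink d C C' ≤ cLink d D D') ∧
    Q = insert (C ∪ C') ((P.erase C).erase C')

/-- A run of the complete-linkage HAC algorithm (with an arbitrary choice of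
tie-breaking at each step): `P 0` is the singleton partition and for every
`r < n - 1`, `P (r+1)` is obtained from `P r` by a merge step. -/
def IsHACChain {n : ℕ} (d : Fin n → Fin n → ℝ) (P : ℕ → Finset (Finset (Fin n))) : Prop :=
  P 0 = singletonPartition n ∧ ∀ r, r < n - 1 → IsMergeStep d (P r) (P (r + 1))

/-- `G` is a partition of `{1,…,n}` into `K₀` nonempty groups. -/
def IsGroupPartition {n K₀ : ℕ} (G : Fin K₀ → Finset (Fin n)) : Prop :=
  (∀ k, (G k).Nonempty) ∧ (∀ i : Fin n, ∃ k, i ∈ G k) ∧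
    ∀ k k' : Fin K₀, k ≠ k' → Disjoint (G k) (G k')

/-- The partition `G` is `d`-separated: every within-group distance is strictly smaller
than every between-group distance (vacuously true when `K₀ = 1`). -/
def IsSeparated {n K₀ : ℕ} (d : Fin n → Fin n → ℝ) (G : Fin K₀ → Finset (Fin n)) : Prop :=
  ∀ k : Fin K₀, ∀ i ∈ G k, ∀ j ∈ G k, i ≠ j →
    ∀ k₁ k₂ : Fin K₀, k₁ ≠ k₂ → ∀ a ∈ G k₁, ∀ b ∈ G k₂, d i j < d a b

/-- `A` is a refinement of `B`: every element of `A` is a subset of some element of `B`. -/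
def IsRefinement {n : ℕ} (A B : Finset (Finset (Fin n))) : Prop :=
  ∀ C ∈ A, ∃ D ∈ B, C ⊆ D

/- ### Auxiliary lemmas -/

lemma le_cLink {n : ℕ} (d : Fin n → Fin n → ℝ) {S S' : Finset (Fin n)} {i j : Fin n}
    (hi : i ∈ S) (hj : j ∈ S') : (d i j : EReal) ≤ cLink d S S' :=
  le_sSup ⟨i, hi, j, hj, rfl⟩

lemma cLink_set_finite {n : ℕ} (d : Fin n → Fin n → ℝ) (S S' : Finset (Fin n)) :
    {x : EReal | ∃ i ∈ S, ∃ j ∈ S', x = (d i j : EReal)}.Finite := by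
  have hsub : {x : EReal | ∃ i ∈ S, ∃ j ∈ S', x = (d i j : EReal)} ⊆
      (fun p : Fin n × Fin n => (d p.1 p.2 : EReal)) ''
        ((↑S : Set (Fin n)) ×ˢ (↑S' : Set (Fin n))) := by
    rintro x ⟨i, hi, j, hj, rfl⟩
    exact ⟨(i, j), ⟨hi, hj⟩, rfl⟩
  exact ((S.finite_toSet.prod S'.finite_toSet).image _).subset hsub

lemma cLink_exists {n : ℕ} (d : Fin n → Fin n → ℝ) {S S' : Finset (Fin n)}
    (hS : S.Nonempty) (hS' : S'.Nonempty) :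
    ∃ i ∈ S, ∃ j ∈ S', cLink d S S' = (d i j : EReal) := by
  obtain ⟨i, hi⟩ := hS
  obtain ⟨j, hj⟩ := hS'
  have hne : {x : EReal | ∃ i ∈ S, ∃ j ∈ S', x = (d i j : EReal)}.Nonempty :=
    ⟨_, i, hi, j, hj, rfl⟩
  have hmem := hne.csSup_mem (cLink_set_finite d S S')
  obtain ⟨a, ha, b, hb, h⟩ := hmem
  exact ⟨a, ha, b, hb, h⟩

lemma cLink_lt_cLink {n : ℕ} {d : Fin n → Fin n → ℝ} {A A' C C' : Finset (Fin n)}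
    (hA : A.Nonempty) (hA' : A'.Nonempty) (hC : C.Nonempty) (hC' : C'.Nonempty)
    (h : ∀ i ∈ A, ∀ j ∈ A', ∀ a ∈ C, ∀ b ∈ C', d i j < d a b) :
    cLink d A A' < cLink d C C' := by
  obtain ⟨i, hi, j, hj, he⟩ := cLink_exists d hA hA'
  obtain ⟨a, ha⟩ := hC
  obtain ⟨b, hb⟩ := hC'
  rw [he]
  calc (d i j : EReal) < (d a b : EReal) := by exact_mod_cast h i hi j hj a ha b hb
    _ ≤ _ := le_cLink d ha hb

/-- The invariant maintained by complete-linkage HAC under separation: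
clusters are nonempty, cover everything, are pairwise disjoint, and each
is contained in some group. -/
def GoodState {n K₀ : ℕ} (G : Fin K₀ → Finset (Fin n)) (Q : Finset (Finset (Fin n))) : Prop :=
  (∀ C ∈ Q, C.Nonempty) ∧ (∀ i : Fin n, ∃ C ∈ Q, i ∈ C) ∧
  (∀ C ∈ Q, ∀ C' ∈ Q, C ≠ C' → Disjoint C C') ∧ (∀ C ∈ Q, ∃ k, C ⊆ G k)

lemma merge_good {n K₀ : ℕ} {d : Fin n → Fin n → ℝ}
    {G : Fin K₀ → Finset (Fin n)} (hG : IsGroupPartition G) (hsep : IsSeparated d G)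
    {Q Q' : Finset (Finset (Fin n))} (hQ : GoodState G Q) (hcard : K₀ < Q.card)
    (hstep : IsMergeStep d Q Q') : GoodState G Q' ∧ Q'.card = Q.card - 1 := by
  classical
  obtain ⟨hne1, hcov, hdisj, href⟩ := hQ
  obtain ⟨C, hC, C', hC', hne, hmin, rfl⟩ := hstep
  -- a default group index
  obtain ⟨i₀, hi₀⟩ := hne1 C hC
  obtain ⟨k₀, -⟩ := hG.2.1 i₀
  set f : Finset (Fin n) → Fin K₀ :=
    fun D => if h : ∃ k, D ⊆ G k then h.choose else k₀ with hf
  have hfspec : ∀ D ∈ Q, D ⊆ G (f D) := by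
    intro D hD
    have h := href D hD
    simp only [hf, dif_pos h]
    exact h.choose_spec
  -- two distinct clusters lie in a common group
  obtain ⟨A, hA, A', hA', hAne, hAeq⟩ :=
    Finset.exists_ne_map_eq_of_card_lt_of_maps_to
      (t := (Finset.univ : Finset (Fin K₀))) (by simpa using hcard)
      (fun D _ => Finset.mem_univ (f D))
  -- the merged pair lies in a common group
  have hsame : ∃ k, C ⊆ G k ∧ C' ⊆ G k := by
    obtain ⟨k₁, hk₁⟩ := href C hC
    obtain ⟨k₂, hk₂⟩ := href C' hC'
    rcases eq_or_ne k₁ k₂ with rfl | hkne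
    · exact ⟨k₁, hk₁, hk₂⟩
    · exfalso
      have hlt : cLink d A A' < cLink d C C' := by
        apply cLink_lt_cLink (hne1 A hA) (hne1 A' hA') (hne1 C hC) (hne1 C' hC')
        intro i hi j hj a ha b hb
        have hij : i ≠ j := by
          intro h
          exact (Finset.disjoint_left.mp (hdisj A hA A' hA' hAne) hi) (h ▸ hj)
        have hjA : j ∈ G (f A) := by rw [hAeq]; exact hfspec A' hA' hj
        exact hsep (f A) i (hfspec A hA hi) j hjA hij k₁ k₂ hkne a (hk₁ ha) b (hk₂ hb)
      exact absurd (hmin A hA A' hA' hAne) (not_le.mpr hlt)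
  obtain ⟨k, hCk, hC'k⟩ := hsame
  have hmem : ∀ D, D ∈ insert (C ∪ C') ((Q.erase C).erase C') ↔
      D = C ∪ C' ∨ (D ∈ Q ∧ D ≠ C ∧ D ≠ C') := by
    intro D
    simp only [Finset.mem_insert, Finset.mem_erase]
    tauto
  have hU : ∀ D, D ∈ Q → D ≠ C → D ≠ C' → Disjoint (C ∪ C') D := by
    intro D hD h1 h2
    rw [Finset.disjoint_union_left]
    exact ⟨hdisj C hC D hD (Ne.symm h1), hdisj C' hC' D hD (Ne.symm h2)⟩
  refine ⟨⟨?_, ?_, ?_, ?_⟩, ?_⟩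
  · intro D hD
    rcases (hmem D).mp hD with rfl | ⟨hDQ, -, -⟩
    · exact ⟨i₀, Finset.mem_union_left _ hi₀⟩
    · exact hne1 D hDQ
  · intro i
    obtain ⟨D, hD, hiD⟩ := hcov i
    by_cases h1 : D = C
    · exact ⟨C ∪ C', (hmem _).mpr (Or.inl rfl), Finset.mem_union_left _ (h1 ▸ hiD)⟩
    by_cases h2 : D = C'
    · exact ⟨C ∪ C', (hmem _).mpr (Or.inl rfl), Finset.mem_union_right _ (h2 ▸ hiD)⟩
    · exact ⟨D, (hmem _).mpr (Or.inr ⟨hD, h1, h2⟩), hiD⟩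
  · intro D hD D' hD' hDD'
    rcases (hmem D).mp hD with rfl | ⟨hDQ, hD1, hD2⟩
    · rcases (hmem D').mp hD' with rfl | ⟨hD'Q, hD'1, hD'2⟩
      · exact absurd rfl hDD'
      · exact hU D' hD'Q hD'1 hD'2
    · rcases (hmem D').mp hD' with rfl | ⟨hD'Q, hD'1, hD'2⟩
      · exact (hU D hDQ hD1 hD2).symm
      · exact hdisj D hDQ D' hD'Q hDD'
  · intro D hD
    rcases (hmem D).mp hD with rfl | ⟨hDQ, -, -⟩
    · exact ⟨k, Finset.union_subset hCk hC'k⟩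
    · exact href D hDQ
  · have hnotin : C ∪ C' ∉ (Q.erase C).erase C' := by
      intro h
      have h1 := Finset.mem_erase.mp h
      have h2 := Finset.mem_erase.mp h1.2
      have hd := hdisj _ h2.2 C hC h2.1
      exact (Finset.disjoint_left.mp hd (Finset.mem_union_left _ hi₀)) hi₀
    rw [Finset.card_insert_of_notMem hnotin,
      Finset.card_erase_of_mem (Finset.mem_erase.mpr ⟨Ne.symm hne, hC'⟩),
      Finset.card_erase_of_mem hC]
    have h2 : 1 < Q.card := Finset.one_lt_card.mpr ⟨C, hC, C', hC', hne⟩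
    omega

/-- **Deterministic core of Theorem 1(a).** If the group partition is `d`-separated, then
for every run of the complete-linkage HAC algorithm (i.e. every tie-breaking), the HAC
partition into `K₀` clusters equals the group partition. -/
theorem hac_exact_recovery {n K₀ : ℕ} (hn : 1 ≤ n)
    (d : Fin n → Fin n → ℝ) (hsym : ∀ i j, d i j = d j i)
    (G : Fin K₀ → Finset (Fin n)) (hG : IsGroupPartition G)
    (hsep : IsSeparated d G)
    (P : ℕ → Finset (Finset (Fin n))) (hP : IsHACChain d P) :
    P (n - K₀) = Finset.univ.image G := by
  classical
  obtain ⟨h0, hstep⟩ := hP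
  obtain ⟨k₀, -⟩ := hG.2.1 ⟨0, hn⟩
  have hK0 : 1 ≤ K₀ := k₀.pos
  have hKn : K₀ ≤ n := by
    have hinj : Function.Injective (fun k : Fin K₀ => ((hG.1 k).choose)) := by
      intro k k' h
      by_contra hne
      have h1 := (hG.1 k).choose_spec
      have h2 := (hG.1 k').choose_spec
      have h2' : (hG.1 k).choose ∈ G k' := by
        have := h
        simp only at this
        rw [this]
        exact h2
      exact Finset.disjoint_left.mp (hG.2.2 k k' hne) h1 h2'
    simpa using Fintype.card_le_of_injective _ hinj
  -- the invariant, by induction on r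
  have good : ∀ r, r ≤ n - K₀ → GoodState G (P r) ∧ (P r).card = n - r := by
    intro r
    induction r with
    | zero =>
      intro _
      rw [h0]
      constructor
      · refine ⟨?_, ?_, ?_, ?_⟩
        · intro C hC
          obtain ⟨i, -, rfl⟩ := Finset.mem_image.mp hC
          exact Finset.singleton_nonempty i
        · intro i
          exact ⟨{i}, Finset.mem_image.mpr ⟨i, Finset.mem_univ i, rfl⟩,
            Finset.mem_singleton_self i⟩
        · intro C hC C' hC' hne
          obtain ⟨i, -, rfl⟩ := Finset.mem_image.mp hC
          obtain ⟨j, -, rfl⟩ := Finset.mem_image.mp hC'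
          have hij : i ≠ j := fun h => hne (by rw [h])
          simp only [Finset.disjoint_singleton_left, Finset.mem_singleton]
          exact hij
        · intro C hC
          obtain ⟨i, -, rfl⟩ := Finset.mem_image.mp hC
          obtain ⟨k, hk⟩ := hG.2.1 i
          exact ⟨k, Finset.singleton_subset_iff.mpr hk⟩
      · unfold singletonPartition
        rw [Finset.card_image_of_injective _ fun i j h => Finset.singleton_injective h]
        simp
    | succ r ih =>
      intro hr
      obtain ⟨hgood, hcard⟩ := ih (Nat.le_of_succ_le hr)
      have hlt : K₀ < (P r).card := by rw [hcard]; omega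
      have hms := hstep r (by omega)
      obtain ⟨hg, hc⟩ := merge_good hG hsep hgood hlt hms
      exact ⟨hg, by rw [hc, hcard]; omega⟩
  obtain ⟨⟨hne1, hcov, hdisj, href⟩, hcard⟩ := good (n - K₀) le_rfl
  set Q := P (n - K₀) with hQdef
  have hcardK : Q.card = K₀ := by rw [hcard]; omega
  set f : Finset (Fin n) → Fin K₀ :=
    fun D => if h : ∃ k, D ⊆ G k then h.choose else k₀ with hf
  have hfspec : ∀ D ∈ Q, D ⊆ G (f D) := by
    intro D hD
    have h := href D hD
    simp only [hf, dif_pos h]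
    exact h.choose_spec
  have hfuniq : ∀ D ∈ Q, ∀ k, (∃ i, i ∈ D ∧ i ∈ G k) → f D = k := by
    intro D hD k ⟨i, hiD, hik⟩
    by_contra hne
    exact Finset.disjoint_left.mp (hG.2.2 _ _ hne) (hfspec D hD hiD) hik
  have himg : Q.image f = Finset.univ := by
    apply Finset.eq_univ_iff_forall.mpr
    intro k
    obtain ⟨i, hi⟩ := hG.1 k
    obtain ⟨C, hCQ, hiC⟩ := hcov i
    exact Finset.mem_image.mpr ⟨C, hCQ, hfuniq C hCQ k ⟨i, hiC, hi⟩⟩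
  have hinj : Set.InjOn f ↑Q := by
    apply Finset.card_image_iff.mp
    rw [himg, hcardK]
    simp
  have heq : ∀ C ∈ Q, C = G (f C) := by
    intro C hCQ
    apply Finset.Subset.antisymm (hfspec C hCQ)
    intro i hi
    obtain ⟨D, hDQ, hiD⟩ := hcov i
    have h1 : f D = f C := by
      rw [hfuniq D hDQ (f C) ⟨i, hiD, hi⟩]
    have h2 : D = C := hinj (Finset.mem_coe.mpr hDQ) (Finset.mem_coe.mpr hCQ) h1
    exact h2 ▸ hiD
  apply Finset.eq_of_subset_of_card_le
  · intro C hC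
    exact Finset.mem_image.mpr ⟨f C, Finset.mem_univ _, (heq C hC).symm⟩
  · rw [hcardK]
    exact le_trans Finset.card_image_le (by simp)
end

section
/- Theorem 1(a): For each T ∈ ℕ, let n(T) ≥ K₀ be an integer (K₀ ≥ 1 fixed), let {G₁^{(T)},…,G_{K₀}^{(T)}} be a partition of {1,…,n(T)} into K₀ nonempty groups, and let d̂^{(T)} be a random symmetric real array on {1,…,n(T)}² defined on a probability space with probability measure P_T. Assume that P_T( {G₁^{(T)},…,G_{K₀}^{(T)}} is d̂^{(T)}-separated ) → 1 as T → ∞. Then P_T( P^{n(T)−K₀}(d̂^{(T)}) = {G₁^{(T)},…,G_{K₀}^{(T)}} ) → 1 as T → ∞, where P^{n−K₀}(d) denotes the complete-linkage HAC partition into K₀ clusters computed from d. -/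
open Finset

section HACProof

variable {n K₀ : ℕ}

lemma cLink_eq_sup (d : Fin n → Fin n → ℝ) (S S' : Finset (Fin n)) :
    cLink d S S' = (S ×ˢ S').sup fun p => ((d p.1 p.2 : ℝ) : EReal) := by
  apply le_antisymm
  · apply sSup_le
    rintro x ⟨i, hi, j, hj, rfl⟩
    exact Finset.le_sup (f := fun p : Fin n × Fin n => ((d p.1 p.2 : ℝ) : EReal))
      (show (i, j) ∈ S ×ˢ S' from Finset.mem_product.2 ⟨hi, hj⟩)
  · apply Finset.sup_le
    rintro ⟨i, j⟩ hij
    rw [Finset.mem_product] at hij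
    exact le_sSup ⟨i, hij.1, j, hij.2, rfl⟩

lemma coe_le_cLink {d : Fin n → Fin n → ℝ} {S S' : Finset (Fin n)} {i j : Fin n}
    (hi : i ∈ S) (hj : j ∈ S') : ((d i j : ℝ) : EReal) ≤ cLink d S S' :=
  le_sSup ⟨i, hi, j, hj, rfl⟩

lemma cLink_lt_of_forall_lt {d : Fin n → Fin n → ℝ}
    {S S' T T' : Finset (Fin n)} {i0 j0 : Fin n}
    (hi0 : i0 ∈ T) (hj0 : j0 ∈ T')
    (h : ∀ i ∈ S, ∀ j ∈ S', d i j < d i0 j0) :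
    cLink d S S' < cLink d T T' := by
  have h1 : cLink d S S' < ((d i0 j0 : ℝ) : EReal) := by
    rw [cLink_eq_sup, Finset.sup_lt_iff (EReal.bot_lt_coe _)]
    rintro ⟨i, j⟩ hij
    rw [Finset.mem_product] at hij
    exact_mod_cast h i hij.1 j hij.2
  exact h1.trans_le (coe_le_cLink hi0 hj0)

/-- The invariant maintained by HAC under separation: the current family of clusters
consists of nonempty, pairwise disjoint, covering sets each contained in some group. -/
def HACInv (G : Fin K₀ → Finset (Fin n)) (P : Finset (Finset (Fin n))) : Prop :=
  (∀ C ∈ P, C.Nonempty) ∧ (∀ i : Fin n, ∃ C ∈ P, i ∈ C) ∧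
    (∀ C ∈ P, ∀ D ∈ P, C ≠ D → Disjoint C D) ∧ (∀ C ∈ P, ∃ k, C ⊆ G k)

lemma inv_base {G : Fin K₀ → Finset (Fin n)} (hG : IsGroupPartition G) :
    HACInv G (singletonPartition n) ∧ (singletonPartition n).card = n := by
  constructor
  · refine ⟨?_, ?_, ?_, ?_⟩
    · rintro C hC
      rw [singletonPartition, Finset.mem_image] at hC
      obtain ⟨i, -, rfl⟩ := hC
      exact ⟨i, Finset.mem_singleton_self i⟩
    · intro i
      exact ⟨{i}, Finset.mem_image.2 ⟨i, Finset.mem_univ i, rfl⟩, Finset.mem_singleton_self i⟩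
    · rintro C hC D hD hCD
      rw [singletonPartition, Finset.mem_image] at hC hD
      obtain ⟨i, -, rfl⟩ := hC
      obtain ⟨j, -, rfl⟩ := hD
      have : i ≠ j := fun h => hCD (by rw [h])
      simp [this, Ne.symm this]
    · rintro C hC
      rw [singletonPartition, Finset.mem_image] at hC
      obtain ⟨i, -, rfl⟩ := hC
      obtain ⟨k, hk⟩ := hG.2.1 i
      exact ⟨k, Finset.singleton_subset_iff.2 hk⟩
  · rw [singletonPartition, Finset.card_image_of_injective _ Finset.singleton_injective]
    simp

lemma group_uniq {G : Fin K₀ → Finset (Fin n)} (hG : IsGroupPartition G)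
    {C : Finset (Fin n)} (hCne : C.Nonempty) {k k' : Fin K₀}
    (h1 : C ⊆ G k) (h2 : C ⊆ G k') : k = k' := by
  by_contra hkk
  obtain ⟨i, hi⟩ := hCne
  exact (Finset.disjoint_left.1 (hG.2.2 k k' hkk)) (h1 hi) (h2 hi)

lemma inv_step (hK₀ : 1 ≤ K₀) {d : Fin n → Fin n → ℝ}
    {G : Fin K₀ → Finset (Fin n)} (hG : IsGroupPartition G) (hsep : IsSeparated d G)
    {P Q : Finset (Finset (Fin n))} (hinv : HACInv G P) (hcard : K₀ < P.card)
    (hstep : IsMergeStep d P Q) :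
    HACInv G Q ∧ Q.card = P.card - 1 := by
  classical
  obtain ⟨hne, hcov, hdis, hgrp⟩ := hinv
  obtain ⟨C, hC, C', hC', hCC', hmin, rfl⟩ := hstep
  set f : Finset (Fin n) → Fin K₀ :=
    fun D => if h : ∃ k, D ⊆ G k then h.choose else ⟨0, hK₀⟩ with hf
  have hfmem : ∀ D ∈ P, D ⊆ G (f D) := by
    intro D hD
    have h := hgrp D hD
    simp only [hf, dif_pos h]
    exact h.choose_spec
  obtain ⟨i0, hi0⟩ := hne C hC
  obtain ⟨j0, hj0⟩ := hne C' hC'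
  -- the merged pair lies in one group
  have hsame : ∃ k, C ⊆ G k ∧ C' ⊆ G k := by
    by_contra hcon
    obtain ⟨k₁, hk₁⟩ := hgrp C hC
    obtain ⟨k₂, hk₂⟩ := hgrp C' hC'
    have hk12 : k₁ ≠ k₂ := fun h => hcon ⟨k₂, h ▸ hk₁, hk₂⟩
    obtain ⟨D, hD, D', hD', hDD', hfeq⟩ :=
      Finset.exists_ne_map_eq_of_card_lt_of_maps_to
        (show (Finset.univ : Finset (Fin K₀)).card < P.card by simpa using hcard)
        (fun D _ => Finset.mem_univ (f D))
    have hlt : cLink d D D' < cLink d C C' := by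
      refine cLink_lt_of_forall_lt hi0 hj0 ?_
      intro i hi j hj
      have hij : i ≠ j := by
        intro h; subst h
        exact (Finset.disjoint_left.1 (hdis D hD D' hD' hDD')) hi hj
      have hj' : j ∈ G (f D) := by rw [hfeq]; exact hfmem D' hD' hj
      exact hsep (f D) i (hfmem D hD hi) j hj' hij k₁ k₂ hk12 i0 (hk₁ hi0) j0 (hk₂ hj0)
    exact absurd (hmin D hD D' hD' hDD') (not_le.2 hlt)
  obtain ⟨k, hk, hk'⟩ := hsame
  have hCdisj : Disjoint C C' := hdis C hC C' hC' hCC'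
  have hmemQ : ∀ D, D ∈ insert (C ∪ C') ((P.erase C).erase C') ↔
      D = C ∪ C' ∨ (D ∈ P ∧ D ≠ C ∧ D ≠ C') := by
    intro D
    simp only [Finset.mem_insert, Finset.mem_erase]
    tauto
  have hnotmem : C ∪ C' ∉ (P.erase C).erase C' := by
    intro hmem
    rw [Finset.mem_erase, Finset.mem_erase] at hmem
    have hd : Disjoint (C ∪ C') C := hdis _ hmem.2.2 C hC hmem.2.1
    exact (Finset.disjoint_left.1 hd) (Finset.mem_union_left _ hi0) hi0
  constructor
  · refine ⟨?_, ?_, ?_, ?_⟩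
    · intro D hD
      rcases (hmemQ D).1 hD with rfl | ⟨hDP, -, -⟩
      · exact ⟨i0, Finset.mem_union_left _ hi0⟩
      · exact hne D hDP
    · intro i
      obtain ⟨D, hD, hiD⟩ := hcov i
      by_cases h1 : D = C
      · exact ⟨C ∪ C', (hmemQ _).2 (Or.inl rfl), Finset.mem_union_left _ (h1 ▸ hiD)⟩
      by_cases h2 : D = C'
      · exact ⟨C ∪ C', (hmemQ _).2 (Or.inl rfl), Finset.mem_union_right _ (h2 ▸ hiD)⟩
      · exact ⟨D, (hmemQ _).2 (Or.inr ⟨hD, h1, h2⟩), hiD⟩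
    · intro A hA B hB hAB
      rcases (hmemQ A).1 hA with rfl | ⟨hAP, hAC, hAC'⟩
      · rcases (hmemQ B).1 hB with rfl | ⟨hBP, hBC, hBC'⟩
        · exact absurd rfl hAB
        · exact Finset.disjoint_union_left.2
            ⟨hdis C hC B hBP (Ne.symm hBC), hdis C' hC' B hBP (Ne.symm hBC')⟩
      · rcases (hmemQ B).1 hB with rfl | ⟨hBP, hBC, hBC'⟩
        · exact (Finset.disjoint_union_left.2
            ⟨hdis C hC A hAP (Ne.symm hAC), hdis C' hC' A hAP (Ne.symm hAC')⟩).symm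
        · exact hdis A hAP B hBP hAB
    · intro D hD
      rcases (hmemQ D).1 hD with rfl | ⟨hDP, -, -⟩
      · exact ⟨k, Finset.union_subset hk hk'⟩
      · exact hgrp D hDP
  · have hC'E : C' ∈ P.erase C := Finset.mem_erase.2 ⟨Ne.symm hCC', hC'⟩
    have h2 : 1 < P.card := Finset.one_lt_card.2 ⟨C, hC, C', hC', hCC'⟩
    rw [Finset.card_insert_of_notMem hnotmem, Finset.card_erase_of_mem hC'E,
      Finset.card_erase_of_mem hC]
    omega

lemma inv_final (hK₀ : 1 ≤ K₀) {G : Fin K₀ → Finset (Fin n)}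
    (hG : IsGroupPartition G) {P : Finset (Finset (Fin n))}
    (hinv : HACInv G P) (hcard : P.card = K₀) :
    P = Finset.univ.image G := by
  classical
  obtain ⟨hne, hcov, hdis, hgrp⟩ := hinv
  set f : Finset (Fin n) → Fin K₀ :=
    fun D => if h : ∃ k, D ⊆ G k then h.choose else ⟨0, hK₀⟩ with hf
  have hfmem : ∀ D ∈ P, D ⊆ G (f D) := by
    intro D hD
    have h := hgrp D hD
    simp only [hf, dif_pos h]
    exact h.choose_spec
  have hsur : ∀ k : Fin K₀, ∃ C ∈ P, C ⊆ G k := by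
    intro k
    obtain ⟨i, hi⟩ := hG.1 k
    obtain ⟨C, hC, hiC⟩ := hcov i
    obtain ⟨k', hk'⟩ := hgrp C hC
    have hkk : k' = k := by
      by_contra h
      exact (Finset.disjoint_left.1 (hG.2.2 k' k h)) (hk' hiC) hi
    exact ⟨C, hC, hkk ▸ hk'⟩
  have himg : (Finset.univ : Finset (Fin K₀)) ⊆ P.image f := by
    intro k _
    obtain ⟨C, hC, hCk⟩ := hsur k
    have : f C = k := group_uniq hG (hne C hC) (hfmem C hC) hCk
    exact Finset.mem_image.2 ⟨C, hC, this⟩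
  have hinj : Set.InjOn f ↑P := by
    rw [← Finset.card_image_iff]
    have h1 : (P.image f).card ≤ P.card := Finset.card_image_le
    have h2 : K₀ ≤ (P.image f).card := by
      calc K₀ = (Finset.univ : Finset (Fin K₀)).card := by simp
        _ ≤ (P.image f).card := Finset.card_le_card himg
    omega
  have hkey : ∀ C ∈ P, ∀ k, C ⊆ G k → C = G k := by
    intro C hC k hCk
    apply Finset.Subset.antisymm hCk
    intro j hj
    obtain ⟨D, hD, hjD⟩ := hcov j
    obtain ⟨k', hk'⟩ := hgrp D hD
    have hk'k : k' = k := by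
      by_contra h
      exact (Finset.disjoint_left.1 (hG.2.2 k' k h)) (hk' hjD) hj
    subst hk'k
    have hDC : D = C := by
      apply hinj (Finset.mem_coe.2 hD) (Finset.mem_coe.2 hC)
      rw [group_uniq hG (hne D hD) (hfmem D hD) hk',
        group_uniq hG (hne C hC) (hfmem C hC) hCk]
    exact hDC ▸ hjD
  ext C
  simp only [Finset.mem_image, Finset.mem_univ, true_and]
  constructor
  · intro hC
    obtain ⟨k, hk⟩ := hgrp C hC
    exact ⟨k, (hkey C hC k hk).symm⟩
  · rintro ⟨k, rfl⟩
    obtain ⟨C, hC, hCk⟩ := hsur k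
    rw [← hkey C hC k hCk]
    exact hC

lemma hac_recovers (hK₀ : 1 ≤ K₀) (hn : K₀ ≤ n)
    {d : Fin n → Fin n → ℝ} {G : Fin K₀ → Finset (Fin n)}
    (hG : IsGroupPartition G) (hsep : IsSeparated d G)
    {Q : ℕ → Finset (Finset (Fin n))} (hQ : IsHACChain d Q) :
    Q (n - K₀) = Finset.univ.image G := by
  have key : ∀ r, r ≤ n - K₀ → HACInv G (Q r) ∧ (Q r).card = n - r := by
    intro r
    induction r with
    | zero =>
      intro _
      rw [hQ.1]
      exact ⟨(inv_base hG).1, by simpa using (inv_base hG).2⟩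
    | succ r ih =>
      intro hr
      obtain ⟨hinv, hcard⟩ := ih (by omega)
      have hstep := hQ.2 r (by omega)
      have hKlt : K₀ < (Q r).card := by omega
      obtain ⟨h1, h2⟩ := inv_step hK₀ hG hsep hinv hKlt hstep
      exact ⟨h1, by omega⟩
  obtain ⟨hinv, hcard⟩ := key (n - K₀) le_rfl
  exact inv_final hK₀ hG hinv (by omega)

end HACProof

open MeasureTheory Filter

/-- **Theorem 1(a).** If, with probability tending to one, the group partition is
`d̂⁽ᵀ⁾`-separated, then with probability tending to one every run of the complete-linkage
HAC algorithm applied to `d̂⁽ᵀ⁾` yields, at the partition with `K₀` clusters, exactly the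
group partition `{G₁⁽ᵀ⁾,…,G_{K₀}⁽ᵀ⁾}`. -/
theorem theorem1a {K₀ : ℕ} (hK₀ : 1 ≤ K₀)
    (n : ℕ → ℕ) (hn : ∀ T, K₀ ≤ n T)
    (Ω : ℕ → Type*) [∀ T, MeasurableSpace (Ω T)]
    (μ : ∀ T, Measure (Ω T)) [∀ T, IsProbabilityMeasure (μ T)]
    (dh : ∀ T, Ω T → Fin (n T) → Fin (n T) → ℝ)
    (hsym : ∀ T ω i j, dh T ω i j = dh T ω j i)
    (G : ∀ T, Fin K₀ → Finset (Fin (n T)))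
    (hG : ∀ T, IsGroupPartition (G T))
    (hsep : Tendsto (fun T => μ T {ω | IsSeparated (dh T ω) (G T)})
      atTop (nhds (1 : ENNReal))) :
    Tendsto
      (fun T => μ T {ω | ∀ Q, IsHACChain (dh T ω) Q →
        Q (n T - K₀) = Finset.univ.image (G T)})
      atTop (nhds (1 : ENNReal)) := by
  refine tendsto_of_tendsto_of_tendsto_of_le_of_le hsep tendsto_const_nhds
    (fun T => measure_mono ?_) (fun T => prob_le_one)
  intro ω hω Q hQ
  exact hac_recovers hK₀ (hn T) (hG T) hω hQ
end

section
/- Theorem 1(b): For each T ∈ ℕ, let n(T) ≥ 1 be an integer with n(T) → ∞ or n(T) ≥ K for all large T, let K₀ ≥ 1 be fixed, let {G₁^{(T)},…,G_{K₀}^{(T)}} be a partition of {1,…,n(T)} into K₀ nonempty groups, and let d̂^{(T)} be a random symmetric real array on {1,…,n(T)}² with probability measure P_T. Assume that P_T( {G₁^{(T)},…,G_{K₀}^{(T)}} is d̂^{(T)}-separated ) → 1 as T → ∞. Then for every fixed integer K > K₀ (with n(T) ≥ K for all sufficiently large T), P_T( the complete-linkage HAC partition P^{n(T)−K}(d̂^{(T)})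 into K clusters is a refinement of {G₁^{(T)},…,G_{K₀}^{(T)}} ) → 1 as T → ∞. -/
open Finset

open MeasureTheory Filter

lemma hac_det {n K₀ K : ℕ} (hK₀ : 1 ≤ K₀) (hK : K₀ < K) (hKn : K ≤ n)
    (d : Fin n → Fin n → ℝ) (G : Fin K₀ → Finset (Fin n)) (hG : IsGroupPartition G)
    (hsep : IsSeparated d G) (Q : ℕ → Finset (Finset (Fin n))) (hQ : IsHACChain d Q) :
    IsRefinement (Q (n - K)) (Finset.univ.image G) := by
  obtain ⟨hG1, hG2, hG3⟩ := hG
  have key : ∀ r, r ≤ n - K →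
      (∀ C ∈ Q r, C.Nonempty) ∧ (∀ C ∈ Q r, ∀ D ∈ Q r, C ≠ D → Disjoint C D) ∧
      (Q r).card = n - r ∧ (∀ C ∈ Q r, ∃ k, C ⊆ G k) := by
    intro r
    induction r with
    | zero =>
      intro _
      rw [hQ.1]
      refine ⟨?_, ?_, ?_, ?_⟩
      · intro C hC
        simp only [singletonPartition, mem_image] at hC
        obtain ⟨i, -, rfl⟩ := hC
        exact ⟨i, mem_singleton_self i⟩
      · intro C hC D hD hne
        simp only [singletonPartition, mem_image] at hC hD
        obtain ⟨i, -, rfl⟩ := hC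
        obtain ⟨j, -, rfl⟩ := hD
        simp only [disjoint_singleton]
        intro h; exact hne (by rw [h])
      · simp only [singletonPartition, Nat.sub_zero]
        rw [Finset.card_image_of_injective _ (fun a b h => by
          simpa using h)]
        simp
      · intro C hC
        simp only [singletonPartition, mem_image] at hC
        obtain ⟨i, -, rfl⟩ := hC
        obtain ⟨k, hk⟩ := hG2 i
        exact ⟨k, by simpa using hk⟩
    | succ r ih =>
      intro hr
      have hr' : r ≤ n - K := by omega
      obtain ⟨hne, hdisj, hcard, href⟩ := ih hr'
      have hrn : r < n - 1 := by omega
      obtain ⟨C, hC, C', hC', hCC', hmin, hins⟩ := hQ.2 r hrn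
      -- pigeonhole: two distinct clusters inside the same group
      have hK0pos : (0 : ℕ) < K₀ := hK₀
      set f : Finset (Fin n) → Fin K₀ := fun S =>
        if h : ∃ k, S ⊆ G k then h.choose else ⟨0, hK0pos⟩ with hf
      have hfsub : ∀ S ∈ Q r, S ⊆ G (f S) := by
        intro S hS
        have h := href S hS
        simp only [hf, dif_pos h]
        exact h.choose_spec
      have hcardlt : (Finset.univ : Finset (Fin K₀)).card < (Q r).card := by
        rw [hcard, Finset.card_univ, Fintype.card_fin]; omega
      obtain ⟨C₁, hC₁, C₂, hC₂, h12, hfeq⟩ :=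
        Finset.exists_ne_map_eq_of_card_lt_of_maps_to hcardlt
          (fun x _ => Finset.mem_univ (f x))
      have hC₁sub : C₁ ⊆ G (f C₁) := hfsub _ hC₁
      have hC₂sub : C₂ ⊆ G (f C₁) := hfeq ▸ hfsub _ hC₂
      -- the merged pair lies in a single group
      obtain ⟨k₁, hk₁⟩ := href C hC
      obtain ⟨k₂, hk₂⟩ := href C' hC'
      have hkk : k₁ = k₂ := by
        by_contra hkk
        obtain ⟨a, ha⟩ := hne C hC
        obtain ⟨b, hb⟩ := hne C' hC'
        have h1 : (d a b : EReal) ≤ cLink d C C' :=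
          le_sSup ⟨a, ha, b, hb, rfl⟩
        have h2 : cLink d C C' ≤ cLink d C₁ C₂ := hmin C₁ hC₁ C₂ hC₂ h12
        have hsne : (C₁ ×ˢ C₂).Nonempty := (hne C₁ hC₁).product (hne C₂ hC₂)
        set W : ℝ := (C₁ ×ˢ C₂).sup' hsne (fun p => d p.1 p.2) with hW
        have h3 : cLink d C₁ C₂ ≤ (W : EReal) := by
          apply sSup_le
          rintro x ⟨i, hi, j, hj, rfl⟩
          have : d i j ≤ W :=
            Finset.le_sup' (fun p : Fin n × Fin n => d p.1 p.2)
              (Finset.mem_product.2 (⟨hi, hj⟩ : (i, j).1 ∈ C₁ ∧ (i, j).2 ∈ C₂))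
          exact_mod_cast this
        have h4 : W < d a b := by
          rw [hW, Finset.sup'_lt_iff]
          rintro ⟨i, j⟩ hij
          rw [Finset.mem_product] at hij
          have hijne : i ≠ j := by
            intro h
            exact (Finset.disjoint_left.1 (hdisj C₁ hC₁ C₂ hC₂ h12)) hij.1 (h ▸ hij.2)
          exact hsep (f C₁) i (hC₁sub hij.1) j (hC₂sub hij.2) hijne k₁ k₂ hkk
            a (hk₁ ha) b (hk₂ hb)
        have h4' : (W : EReal) < (d a b : EReal) := by exact_mod_cast h4
        exact absurd (h1.trans (h2.trans h3)) (not_le.2 h4')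
      -- new partition facts
      have hC'mem : C' ∈ (Q r).erase C := Finset.mem_erase.2 ⟨Ne.symm hCC', hC'⟩
      have hnotmem : C ∪ C' ∉ ((Q r).erase C).erase C' := by
        intro hmem
        have hD := Finset.mem_of_mem_erase (Finset.mem_of_mem_erase hmem)
        have hDne : C ∪ C' ≠ C := (Finset.mem_erase.1 (Finset.mem_of_mem_erase hmem)).1
        obtain ⟨a, ha⟩ := hne C hC
        exact (Finset.disjoint_left.1 (hdisj _ hD C hC hDne))
          (Finset.mem_union_left _ ha) ha
      rw [hins]
      refine ⟨?_, ?_, ?_, ?_⟩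
      · intro D hD
        rcases Finset.mem_insert.1 hD with rfl | hD
        · obtain ⟨a, ha⟩ := hne C hC
          exact ⟨a, Finset.mem_union_left _ ha⟩
        · exact hne _ (Finset.mem_of_mem_erase (Finset.mem_of_mem_erase hD))
      · intro D hD E hE hDE
        rcases Finset.mem_insert.1 hD with rfl | hD <;>
          rcases Finset.mem_insert.1 hE with rfl | hE
        · exact absurd rfl hDE
        · have hE1 := Finset.mem_erase.1 hE
          have hE2 := Finset.mem_erase.1 hE1.2
          exact Finset.disjoint_union_left.2
            ⟨hdisj C hC E hE2.2 (Ne.symm hE2.1), hdisj C' hC' E hE2.2 (Ne.symm hE1.1)⟩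
        · have hD1 := Finset.mem_erase.1 hD
          have hD2 := Finset.mem_erase.1 hD1.2
          exact Finset.disjoint_union_right.2
            ⟨hdisj D hD2.2 C hC hD2.1, hdisj D hD2.2 C' hC' hD1.1⟩
        · exact hdisj D (Finset.mem_of_mem_erase (Finset.mem_of_mem_erase hD))
            E (Finset.mem_of_mem_erase (Finset.mem_of_mem_erase hE)) hDE
      · rw [Finset.card_insert_of_notMem hnotmem,
          Finset.card_erase_of_mem hC'mem, Finset.card_erase_of_mem hC, hcard]
        omega
      · intro D hD
        rcases Finset.mem_insert.1 hD with rfl | hD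
        · exact ⟨k₁, Finset.union_subset hk₁ (hkk ▸ hk₂)⟩
        · exact href D (Finset.mem_of_mem_erase (Finset.mem_of_mem_erase hD))
  intro C hC
  obtain ⟨k, hk⟩ := (key (n - K) le_rfl).2.2.2 C hC
  exact ⟨G k, Finset.mem_image.2 ⟨k, Finset.mem_univ k, rfl⟩, hk⟩

/-- **Theorem 1(b).** If, with probability tending to one, the group partition is
`d̂⁽ᵀ⁾`-separated, then for every fixed `K > K₀` (with `K ≤ n T` for all large `T`), with
probability tending to one every run of the complete-linkage HAC algorithm yields a
partition into `K` clusters that is a refinement of the group partition. -/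
theorem theorem1b {K₀ : ℕ} (hK₀ : 1 ≤ K₀)
    (n : ℕ → ℕ) (hn : ∀ T, 1 ≤ n T)
    (Ω : ℕ → Type*) [∀ T, MeasurableSpace (Ω T)]
    (μ : ∀ T, Measure (Ω T)) [∀ T, IsProbabilityMeasure (μ T)]
    (dh : ∀ T, Ω T → Fin (n T) → Fin (n T) → ℝ)
    (hsym : ∀ T ω i j, dh T ω i j = dh T ω j i)
    (G : ∀ T, Fin K₀ → Finset (Fin (n T)))
    (hG : ∀ T, IsGroupPartition (G T))
    (hsep : Tendsto (fun T => μ T {ω | IsSeparated (dh T ω) (G T)})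
      atTop (nhds (1 : ENNReal)))
    (K : ℕ) (hK : K₀ < K) (hKn : ∀ᶠ T in atTop, K ≤ n T) :
    Tendsto
      (fun T => μ T {ω | ∀ Q, IsHACChain (dh T ω) Q →
        IsRefinement (Q (n T - K)) (Finset.univ.image (G T))})
      atTop (nhds (1 : ENNReal)) := by
  refine tendsto_of_tendsto_of_tendsto_of_le_of_le' hsep tendsto_const_nhds ?_ ?_
  · filter_upwards [hKn] with T hT
    apply measure_mono
    intro ω hω Q hQ
    exact hac_det hK₀ hK hT (dh T ω) (G T) (hG T) hω Q hQ
  · exact Filter.Eventually.of_forall fun T => prob_le_one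
end

section
/- Theorem 2 (consistency of the estimator of the number of groups): Fix K₀ ≥ 1 and c₀ > 0. For each T ∈ ℕ, let n(T) ≥ K₀ be an integer, let {G₁^{(T)},…,G_{K₀}^{(T)}} be a partition of {1,…,n(T)} into K₀ nonempty groups, let d̂^{(T)} be a random symmetric real array on {1,…,n(T)}² with probability measure P_T, and let h_max(T) > 0 satisfy (log n(T) + log T)/(T·h_max(T)) → 0. Assume: (8) the within-group maximum M_T = max_{1≤k≤K₀} max_{i,j∈G_k^{(T)}, i≠j} d̂^{(T)}_{ij} satisfies: for every ε > 0 there exists C < ∞ with limsup_T P_T( M_T > C·√(log n(T) + log T) ) ≤ ε; (9) the between-group minimum m_T = min_{1≤k<k′≤K₀} min_{i∈G_k^{(T)}, j∈G_{k′}^{(T)}} d̂^{(T)}_{ij} satisfies m_T ≥ c₀·√(T·h_max(T)) + R_T, where R_T/√(T·h_max(T)) → 0 in probability (this hypothesis is vacuous if K₀ = 1); and (10) (π_T) is a deterministic sequence with π_T/√(log n(T) + log T) → ∞ and π_T/√(T·h_max(T)) → 0. Then P_T( K̂₀(d̂^{(T)}, π_T) = K₀ ) → 1 as T → ∞. -/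
open Finset

/-- The thresholded dendrogram estimator of the number of groups:
`K̂₀(d,π) = min { K ∈ {1,…,n} : every cluster of the HAC partition into K clusters has
within-cluster dissimilarity at most π }`. -/
noncomputable def Khat {n : ℕ} (d : Fin n → Fin n → ℝ)
    (P : ℕ → Finset (Finset (Fin n))) (π : ℝ) : ℕ :=
  sInf {K : ℕ | 1 ≤ K ∧ K ≤ n ∧ ∀ C ∈ P (n - K), cDiam d C ≤ (π : EReal)}

/-- Maximal within-group distance `max_{k} max_{i,j ∈ G k, i ≠ j} d i j` (real-valued
supremum; by Mathlib's convention it is `0` if there is no within-group pair). -/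
noncomputable def withinMax {n K₀ : ℕ} (d : Fin n → Fin n → ℝ)
    (G : Fin K₀ → Finset (Fin n)) : ℝ :=
  sSup {x : ℝ | ∃ k, ∃ i ∈ G k, ∃ j ∈ G k, i ≠ j ∧ x = d i j}

/-- Minimal between-group distance `min_{k < k'} min_{i ∈ G k, j ∈ G k'} d i j`
(real-valued infimum). -/
noncomputable def betweenMin {n K₀ : ℕ} (d : Fin n → Fin n → ℝ)
    (G : Fin K₀ → Finset (Fin n)) : ℝ :=
  sInf {x : ℝ | ∃ k k' : Fin K₀, k ≠ k' ∧ ∃ i ∈ G k, ∃ j ∈ G k', x = d i j}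


section Aux

/-- A family of clusters forming a partition of `Fin n`. -/
def IsPart {n : ℕ} (P : Finset (Finset (Fin n))) : Prop :=
  (∀ C ∈ P, C.Nonempty) ∧ (∀ i : Fin n, ∃ C ∈ P, i ∈ C) ∧
    ∀ C ∈ P, ∀ C' ∈ P, C ≠ C' → Disjoint C C'

lemma isPart_singletonPartition (n : ℕ) : IsPart (singletonPartition n) := by
  refine ⟨?_, ?_, ?_⟩
  · intro C hC
    simp only [singletonPartition, mem_image, mem_univ, true_and] at hC
    obtain ⟨i, rfl⟩ := hC
    exact ⟨i, mem_singleton_self i⟩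
  · intro i
    exact ⟨{i}, by simp [singletonPartition], mem_singleton_self i⟩
  · intro C hC C' hC' hne
    simp only [singletonPartition, mem_image, mem_univ, true_and] at hC hC'
    obtain ⟨i, rfl⟩ := hC
    obtain ⟨j, rfl⟩ := hC'
    rw [Finset.disjoint_singleton]
    intro h
    exact hne (by rw [h])

lemma card_singletonPartition (n : ℕ) : (singletonPartition n).card = n := by
  rw [singletonPartition,
    Finset.card_image_of_injective _ (fun a b h => Finset.singleton_injective h),
    Finset.card_univ, Fintype.card_fin]

lemma mergeStep_part {n : ℕ} {d : Fin n → Fin n → ℝ} {P Q : Finset (Finset (Fin n))}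
    (h : IsMergeStep d P Q) (hP : IsPart P) : IsPart Q ∧ Q.card + 1 = P.card := by
  obtain ⟨C, hC, C', hC', hne, -, rfl⟩ := h
  obtain ⟨hne', hcov, hdis⟩ := hP
  have hCne : C.Nonempty := hne' C hC
  have hC'mem : C' ∈ P.erase C := Finset.mem_erase_of_ne_of_mem (Ne.symm hne) hC'
  have hUnotmem : C ∪ C' ∉ (P.erase C).erase C' := by
    intro hmem
    have h2 : C ∪ C' ∈ P.erase C := Finset.mem_of_mem_erase hmem
    have h3 : C ∪ C' ≠ C := Finset.ne_of_mem_erase h2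
    have h4 : C ∪ C' ∈ P := Finset.mem_of_mem_erase h2
    obtain ⟨a, ha⟩ := hCne
    exact (Finset.disjoint_left.mp (hdis _ h4 C hC h3) (Finset.mem_union_left _ ha)) ha
  constructor
  · refine ⟨?_, ?_, ?_⟩
    · intro D hD
      rcases Finset.mem_insert.mp hD with rfl | hD'
      · obtain ⟨a, ha⟩ := hCne; exact ⟨a, Finset.mem_union_left _ ha⟩
      · exact hne' D (Finset.mem_of_mem_erase (Finset.mem_of_mem_erase hD'))
    · intro i
      obtain ⟨D, hD, hiD⟩ := hcov i
      by_cases h1 : D = C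
      · exact ⟨C ∪ C', Finset.mem_insert_self _ _, Finset.mem_union_left _ (h1 ▸ hiD)⟩
      by_cases h2 : D = C'
      · exact ⟨C ∪ C', Finset.mem_insert_self _ _, Finset.mem_union_right _ (h2 ▸ hiD)⟩
      · exact ⟨D, Finset.mem_insert_of_mem
          (Finset.mem_erase_of_ne_of_mem h2 (Finset.mem_erase_of_ne_of_mem h1 hD)), hiD⟩
    · intro D hD D' hD' hne2
      rcases Finset.mem_insert.mp hD with rfl | hDe
      · rcases Finset.mem_insert.mp hD' with rfl | hDe'
        · exact absurd rfl hne2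
        · have h5 : D' ∈ P := Finset.mem_of_mem_erase (Finset.mem_of_mem_erase hDe')
          have h6 : D' ≠ C' := Finset.ne_of_mem_erase hDe'
          have h7 : D' ≠ C := Finset.ne_of_mem_erase (Finset.mem_of_mem_erase hDe')
          exact Finset.disjoint_union_left.mpr
            ⟨hdis C hC D' h5 (Ne.symm h7), hdis C' hC' D' h5 (Ne.symm h6)⟩
      · rcases Finset.mem_insert.mp hD' with rfl | hDe'
        · have h5 : D ∈ P := Finset.mem_of_mem_erase (Finset.mem_of_mem_erase hDe)
          have h6 : D ≠ C' := Finset.ne_of_mem_erase hDe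
          have h7 : D ≠ C := Finset.ne_of_mem_erase (Finset.mem_of_mem_erase hDe)
          exact (Finset.disjoint_union_left.mpr
            ⟨hdis C hC D h5 (Ne.symm h7), hdis C' hC' D h5 (Ne.symm h6)⟩).symm
        · exact hdis D (Finset.mem_of_mem_erase (Finset.mem_of_mem_erase hDe))
            D' (Finset.mem_of_mem_erase (Finset.mem_of_mem_erase hDe')) hne2
  · rw [Finset.card_insert_of_notMem hUnotmem]
    have h1 : ((P.erase C).erase C').card + 1 = (P.erase C).card :=
      Finset.card_erase_add_one hC'mem
    have h2 : (P.erase C).card + 1 = P.card := Finset.card_erase_add_one hC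
    omega

lemma chain_part {n : ℕ} {d : Fin n → Fin n → ℝ} {Q : ℕ → Finset (Finset (Fin n))}
    (hQ : IsHACChain d Q) : ∀ r, r ≤ n - 1 → IsPart (Q r) ∧ (Q r).card = n - r := by
  intro r
  induction r with
  | zero =>
    intro _
    rw [hQ.1]
    exact ⟨isPart_singletonPartition n, by rw [card_singletonPartition]; omega⟩
  | succ r ih =>
    intro hr
    have hr' : r < n - 1 := lt_of_lt_of_le (Nat.lt_succ_self r) hr
    obtain ⟨hp, hc⟩ := ih (le_of_lt hr')
    obtain ⟨hq, hcard⟩ := mergeStep_part (hQ.2 r hr') hp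
    exact ⟨hq, by omega⟩

lemma chain_refines {n K₀ : ℕ} {d : Fin n → Fin n → ℝ} {G : Fin K₀ → Finset (Fin n)}
    (hK₀ : 1 ≤ K₀) (hG : IsGroupPartition G) {π : ℝ}
    (hW : ∀ k, ∀ i ∈ G k, ∀ j ∈ G k, i ≠ j → d i j ≤ π)
    (hB : ∀ k k' : Fin K₀, k ≠ k' → ∀ a ∈ G k, ∀ b ∈ G k', π < d a b)
    {Q : ℕ → Finset (Finset (Fin n))} (hQ : IsHACChain d Q) :
    ∀ r, r ≤ n - K₀ → ∀ C ∈ Q r, ∃ k, C ⊆ G k := by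
  intro r
  induction r with
  | zero =>
    intro _ C hC
    rw [hQ.1] at hC
    simp only [singletonPartition, mem_image, mem_univ, true_and] at hC
    obtain ⟨i, rfl⟩ := hC
    obtain ⟨k, hk⟩ := hG.2.1 i
    exact ⟨k, Finset.singleton_subset_iff.mpr hk⟩
  | succ r ih =>
    intro hr
    have hrlt : r < n - K₀ := hr
    have hrlt1 : r < n - 1 := lt_of_lt_of_le hrlt (Nat.sub_le_sub_left hK₀ n)
    have href := ih (le_of_lt hrlt)
    obtain ⟨hp, hc⟩ := chain_part hQ r (le_of_lt hrlt1)
    obtain ⟨C, hC, C', hC', hne, hmin, hstep⟩ := hQ.2 r hrlt1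
    classical
    set f : Finset (Fin n) → Fin K₀ :=
      fun D => if h : ∃ k, D ⊆ G k then h.choose else ⟨0, hK₀⟩ with hf
    have hfspec : ∀ D ∈ Q r, D ⊆ G (f D) := by
      intro D hD
      have h := href D hD
      simp only [hf]
      rw [dif_pos h]
      exact h.choose_spec
    have hcard : (Finset.univ : Finset (Fin K₀)).card < (Q r).card := by
      rw [hc, Finset.card_univ, Fintype.card_fin]
      omega
    obtain ⟨D, hD, D', hD', hDne, hfeq⟩ :=
      Finset.exists_ne_map_eq_of_card_lt_of_maps_to hcard
        (fun D _ => Finset.mem_univ (f D))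
    have hDD' : cLink d D D' ≤ (π : EReal) := by
      apply sSup_le
      rintro x ⟨i, hi, j, hj, rfl⟩
      have hij : i ≠ j := by
        intro h
        subst h
        exact (Finset.disjoint_left.mp (hp.2.2 D hD D' hD' hDne) hi) hj
      have hd : d i j ≤ π :=
        hW (f D) i (hfspec D hD hi) j (by rw [hfeq]; exact hfspec D' hD' hj) hij
      exact_mod_cast hd
    have hCC' : cLink d C C' ≤ (π : EReal) := le_trans (hmin D hD D' hD' hDne) hDD'
    have hkeq : f C = f C' := by
      by_contra hkne
      obtain ⟨a, ha⟩ := hp.1 C hC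
      obtain ⟨b, hb⟩ := hp.1 C' hC'
      have h1 : (d a b : EReal) ≤ cLink d C C' := le_sSup ⟨a, ha, b, hb, rfl⟩
      have h2 : π < d a b := hB (f C) (f C') hkne a (hfspec C hC ha) b (hfspec C' hC' hb)
      have h3 : (π : EReal) < (d a b : EReal) := by exact_mod_cast h2
      exact lt_irrefl _ (lt_of_lt_of_le h3 (le_trans h1 hCC'))
    intro E hE
    rw [hstep] at hE
    rcases Finset.mem_insert.mp hE with rfl | hE'
    · exact ⟨f C, Finset.union_subset (hfspec C hC) (by rw [hkeq]; exact hfspec C' hC')⟩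
    · exact href E (Finset.mem_of_mem_erase (Finset.mem_of_mem_erase hE'))

lemma khat_eq {n K₀ : ℕ} {d : Fin n → Fin n → ℝ} {G : Fin K₀ → Finset (Fin n)}
    (hK₀ : 1 ≤ K₀) (hn : K₀ ≤ n) (hG : IsGroupPartition G) {π : ℝ}
    (hW : ∀ k, ∀ i ∈ G k, ∀ j ∈ G k, i ≠ j → d i j ≤ π)
    (hB : ∀ k k' : Fin K₀, k ≠ k' → ∀ a ∈ G k, ∀ b ∈ G k', π < d a b)
    {Q : ℕ → Finset (Finset (Fin n))} (hQ : IsHACChain d Q) :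
    Khat d Q π = K₀ := by
  classical
  have hmem : K₀ ∈ {K : ℕ | 1 ≤ K ∧ K ≤ n ∧ ∀ C ∈ Q (n - K), cDiam d C ≤ (π : EReal)} := by
    refine ⟨hK₀, hn, ?_⟩
    intro C hC
    obtain ⟨k, hk⟩ := chain_refines hK₀ hG hW hB hQ (n - K₀) le_rfl C hC
    apply sSup_le
    rintro x ⟨i, hi, j, hj, hij, rfl⟩
    exact_mod_cast hW k i (hk hi) j (hk hj) hij
  have hlb : ∀ K ∈ {K : ℕ | 1 ≤ K ∧ K ≤ n ∧ ∀ C ∈ Q (n - K), cDiam d C ≤ (π : EReal)},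
      K₀ ≤ K := by
    rintro K ⟨hK1, hKn, hKd⟩
    by_contra hcon
    push_neg at hcon
    obtain ⟨hp, hc⟩ := chain_part hQ (n - K) (Nat.sub_le_sub_left hK1 n)
    have hcK : (Q (n - K)).card = K := by omega
    choose g hg using hG.1
    choose Cl hCl hgCl using fun k => hp.2.1 (g k)
    have hcard2 : (Q (n - K)).card < (Finset.univ : Finset (Fin K₀)).card := by
      rw [hcK, Finset.card_univ, Fintype.card_fin]
      exact hcon
    obtain ⟨k, -, k', -, hkne, hCeq⟩ :=
      Finset.exists_ne_map_eq_of_card_lt_of_maps_to hcard2 (fun k _ => hCl k)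
    have hne' : g k ≠ g k' := by
      intro h'
      exact (Finset.disjoint_left.mp (hG.2.2 k k' hkne) (hg k)) (h' ▸ hg k')
    have h1 : (d (g k) (g k') : EReal) ≤ cDiam d (Cl k) :=
      le_sSup ⟨g k, hgCl k, g k', by rw [hCeq]; exact hgCl k', hne', rfl⟩
    have h2 := hKd (Cl k) (hCl k)
    have h3 : (π : EReal) < (d (g k) (g k') : EReal) := by
      exact_mod_cast hB k k' hkne (g k) (hg k) (g k') (hg k')
    exact lt_irrefl _ (lt_of_lt_of_le h3 (le_trans h1 h2))
  exact le_antisymm (Nat.sInf_le hmem) (le_csInf ⟨K₀, hmem⟩ hlb)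

lemma withinSet_finite {n K₀ : ℕ} (d : Fin n → Fin n → ℝ) (G : Fin K₀ → Finset (Fin n)) :
    {x : ℝ | ∃ k, ∃ i ∈ G k, ∃ j ∈ G k, i ≠ j ∧ x = d i j}.Finite := by
  apply Set.Finite.subset (Set.finite_range (fun p : Fin n × Fin n => d p.1 p.2))
  rintro x ⟨k, i, hi, j, hj, hij, rfl⟩
  exact ⟨(i, j), rfl⟩

lemma betweenSet_finite {n K₀ : ℕ} (d : Fin n → Fin n → ℝ) (G : Fin K₀ → Finset (Fin n)) :
    {x : ℝ | ∃ k k' : Fin K₀, k ≠ k' ∧ ∃ i ∈ G k, ∃ j ∈ G k', x = d i j}.Finite := by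
  apply Set.Finite.subset (Set.finite_range (fun p : Fin n × Fin n => d p.1 p.2))
  rintro x ⟨k, k', hkk', i, hi, j, hj, rfl⟩
  exact ⟨(i, j), rfl⟩

lemma le_withinMax {n K₀ : ℕ} {d : Fin n → Fin n → ℝ} {G : Fin K₀ → Finset (Fin n)}
    {k : Fin K₀} {i j : Fin n} (hi : i ∈ G k) (hj : j ∈ G k) (hij : i ≠ j) :
    d i j ≤ withinMax d G :=
  le_csSup ((withinSet_finite d G).bddAbove) ⟨k, i, hi, j, hj, hij, rfl⟩

lemma betweenMin_le {n K₀ : ℕ} {d : Fin n → Fin n → ℝ} {G : Fin K₀ → Finset (Fin n)}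
    {k k' : Fin K₀} (hkk' : k ≠ k') {i j : Fin n} (hi : i ∈ G k) (hj : j ∈ G k') :
    betweenMin d G ≤ d i j :=
  csInf_le ((betweenSet_finite d G).bddBelow) ⟨k, k', hkk', i, hi, j, hj, rfl⟩

end Aux

open MeasureTheory Filter

/-- **Theorem 2 (consistency of the estimator of the number of groups).** Under the
within-group bound (8), the between-group bound (9) (vacuous when `K₀ = 1`) and the
threshold condition (10), the thresholded dendrogram estimator satisfies
`P_T(K̂₀ = K₀) → 1`, for every run (tie-breaking) of the complete-linkage HAC algorithm. -/
theorem theorem2_consistency_of_Khat {K₀ : ℕ} (hK₀ : 1 ≤ K₀) (c₀ : ℝ) (hc₀ : 0 < c₀)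
    (n : ℕ → ℕ) (hn : ∀ T, K₀ ≤ n T)
    (Ω : ℕ → Type*) [∀ T, MeasurableSpace (Ω T)]
    (μ : ∀ T, Measure (Ω T)) [∀ T, IsProbabilityMeasure (μ T)]
    (dh : ∀ T, Ω T → Fin (n T) → Fin (n T) → ℝ)
    (hsym : ∀ T ω i j, dh T ω i j = dh T ω j i)
    (G : ∀ T, Fin K₀ → Finset (Fin (n T)))
    (hG : ∀ T, IsGroupPartition (G T))
    (hmax : ℕ → ℝ) (hhmax : ∀ T, 0 < hmax T)
    (hratio : Tendsto
      (fun T : ℕ => (Real.log (n T) + Real.log (T : ℝ)) / ((T : ℝ) * hmax T))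
      atTop (nhds 0))
    -- property (8): the within-group maximum is O_p(√(log n + log T))
    (h8 : ∀ ε : ℝ, 0 < ε → ∃ C : ℝ,
      Filter.limsup
        (fun T => μ T {ω |
          C * Real.sqrt (Real.log (n T) + Real.log (T : ℝ)) < withinMax (dh T ω) (G T)})
        atTop ≤ ENNReal.ofReal ε)
    -- property (9): the between-group minimum is ≥ c₀·√(T·h_max) + o_p(√(T·h_max))
    (h9 : 1 < K₀ → ∃ R : ∀ T, Ω T → ℝ,
      (∀ (T : ℕ) (ω : Ω T), c₀ * Real.sqrt ((T : ℝ) * hmax T) + R T ω ≤ betweenMin (dh T ω) (G T)) ∧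
        ∀ ε : ℝ, 0 < ε →
          Tendsto (fun T => μ T {ω | ε * Real.sqrt ((T : ℝ) * hmax T) < |R T ω|})
            atTop (nhds 0))
    -- property (10): √(log n + log T) ≪ π_T ≪ √(T·h_max)
    (π : ℕ → ℝ)
    (hπ1 : Tendsto
      (fun T => π T / Real.sqrt (Real.log (n T) + Real.log (T : ℝ))) atTop atTop)
    (hπ2 : Tendsto
      (fun T => π T / Real.sqrt ((T : ℝ) * hmax T)) atTop (nhds 0)) :
    Tendsto
      (fun T => μ T {ω | ∀ Q, IsHACChain (dh T ω) Q → Khat (dh T ω) Q (π T) = K₀})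
      atTop (nhds (1 : ENNReal)) := by
    classical
  -- the key deterministic implication
  have key : ∀ T (ω : Ω T), withinMax (dh T ω) (G T) ≤ π T →
      (∀ k k' : Fin K₀, k ≠ k' → π T < betweenMin (dh T ω) (G T)) →
      ∀ Qc, IsHACChain (dh T ω) Qc → Khat (dh T ω) Qc (π T) = K₀ := by
    intro T ω h1 h2 Qc hQc
    refine khat_eq hK₀ (hn T) (hG T) ?_ ?_ hQc
    · intro k i hi j hj hij
      exact le_trans (le_withinMax hi hj hij) h1
    · intro k k' hkk' a ha b hb
      exact lt_of_lt_of_le (h2 k k' hkk') (betweenMin_le hkk' ha hb)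
  -- the within-group bad event tends to zero
  have hA0 : Tendsto (fun T => μ T {ω | π T < withinMax (dh T ω) (G T)}) atTop (nhds 0) := by
    have hls : ∀ ε : ℝ, 0 < ε →
        Filter.limsup (fun T => μ T {ω | π T < withinMax (dh T ω) (G T)}) atTop
          ≤ ENNReal.ofReal ε := by
      intro ε hε
      obtain ⟨C, hC⟩ := h8 ε hε
      refine le_trans (Filter.limsup_le_limsup ?_) hC
      have hev : ∀ᶠ T in atTop,
          C * Real.sqrt (Real.log (n T) + Real.log (T : ℝ)) ≤ π T := by
        filter_upwards [hπ1.eventually_ge_atTop (|C| + 1)] with T hT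
        set s := Real.sqrt (Real.log (n T) + Real.log (T : ℝ)) with hs
        have hs0 : 0 ≤ s := Real.sqrt_nonneg _
        rcases eq_or_lt_of_le hs0 with h0 | h0
        · exfalso
          rw [← h0] at hT
          simp only [div_zero] at hT
          have : (0:ℝ) < |C| + 1 := by positivity
          linarith [abs_nonneg C]
        · have h1 : (|C| + 1) * s ≤ π T := by
            rw [le_div_iff₀ h0] at hT
            linarith
          have h2 : C * s ≤ (|C| + 1) * s := by
            nlinarith [le_abs_self C, hs0]
          linarith
      filter_upwards [hev] with T hT
      exact measure_mono (fun ω hω => lt_of_le_of_lt hT hω)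
    have h2 : ∀ m : ℕ,
        Filter.limsup (fun T => μ T {ω | π T < withinMax (dh T ω) (G T)}) atTop
          ≤ ENNReal.ofReal (1 / (m + 1)) := fun m => hls _ (by positivity)
    have h3 : Tendsto (fun m : ℕ => ENNReal.ofReal (1 / (m + 1 : ℝ))) atTop (nhds 0) := by
      have := ENNReal.tendsto_ofReal (tendsto_one_div_add_atTop_nhds_zero_nat)
      simpa using this
    have hls0 : Filter.limsup (fun T => μ T {ω | π T < withinMax (dh T ω) (G T)}) atTop
        ≤ 0 := ge_of_tendsto' h3 h2
    exact tendsto_of_le_liminf_of_limsup_le zero_le hls0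
  -- main reduction: it suffices to bound a "bad" event
  have main : ∀ bad : (T : ℕ) → Set (Ω T),
      (∀ T (ω : Ω T), ω ∉ bad T →
        ∀ Qc, IsHACChain (dh T ω) Qc → Khat (dh T ω) Qc (π T) = K₀) →
      Tendsto (fun T => μ T (bad T)) atTop (nhds 0) →
      Tendsto
        (fun T => μ T {ω | ∀ Q, IsHACChain (dh T ω) Q → Khat (dh T ω) Q (π T) = K₀})
        atTop (nhds (1 : ENNReal)) := by
    intro bad hgood hbad
    have hup : ∀ T, μ T {ω | ∀ Q, IsHACChain (dh T ω) Q → Khat (dh T ω) Q (π T) = K₀}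
        ≤ 1 := fun T => prob_le_one
    have hlow : ∀ T, 1 - μ T (bad T)
        ≤ μ T {ω | ∀ Q, IsHACChain (dh T ω) Q → Khat (dh T ω) Q (π T) = K₀} := by
      intro T
      refine tsub_le_iff_right.mpr ?_
      have hsub : (Set.univ : Set (Ω T)) ⊆
          {ω | ∀ Q, IsHACChain (dh T ω) Q → Khat (dh T ω) Q (π T) = K₀} ∪ bad T := by
        intro ω _
        by_cases h : ω ∈ bad T
        · exact Or.inr h
        · exact Or.inl (hgood T ω h)
      calc (1 : ENNReal) = μ T Set.univ := (measure_univ).symm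
        _ ≤ μ T ({ω | ∀ Q, IsHACChain (dh T ω) Q → Khat (dh T ω) Q (π T) = K₀} ∪ bad T) :=
            measure_mono hsub
        _ ≤ _ := measure_union_le _ _
    have hsub1 : Tendsto (fun T => (1 : ENNReal) - μ T (bad T)) atTop (nhds 1) := by
      have := ENNReal.Tendsto.sub (tendsto_const_nhds (x := (1 : ENNReal))) hbad
        (Or.inl ENNReal.one_ne_top)
      simpa using this
    exact tendsto_of_tendsto_of_tendsto_of_le_of_le hsub1 tendsto_const_nhds hlow hup
  rcases eq_or_lt_of_le hK₀ with hK1 | hKgt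
  · -- case K₀ = 1 : no between-group condition is needed
    refine main (fun T => {ω | π T < withinMax (dh T ω) (G T)}) ?_ hA0
    intro T ω hω Qc hQc
    refine key T ω (not_lt.mp hω) ?_ Qc hQc
    intro k k' hkk'
    exfalso
    apply hkk'
    have : K₀ = 1 := hK1.symm
    subst this
    exact Subsingleton.elim k k'
  · -- case K₀ > 1 : use property (9)
    obtain ⟨R, hR1, hR2⟩ := h9 hKgt
    have hB0 : Tendsto (fun T => μ T {ω | betweenMin (dh T ω) (G T) ≤ π T})
        atTop (nhds 0) := by
      have hev : ∀ᶠ T in atTop,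
          {ω | betweenMin (dh T ω) (G T) ≤ π T} ⊆
            {ω : Ω T | c₀ / 2 * Real.sqrt ((T : ℝ) * hmax T) < |R T ω|} := by
        have h1 : ∀ᶠ T in atTop, π T / Real.sqrt ((T : ℝ) * hmax T) < c₀ / 2 :=
          hπ2.eventually_lt_const (half_pos hc₀)
        filter_upwards [h1, Filter.eventually_ge_atTop 1] with T hT hT1
        intro ω hω
        set s := Real.sqrt ((T : ℝ) * hmax T) with hs
        have hs0 : 0 < s := Real.sqrt_pos.mpr
          (mul_pos (by exact_mod_cast Nat.lt_of_lt_of_le Nat.zero_lt_one hT1) (hhmax T))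
        have hπs : π T < c₀ / 2 * s := by
          rw [div_lt_iff₀ hs0] at hT
          linarith
        by_contra hcon
        simp only [Set.mem_setOf_eq, not_lt] at hcon
        have hRlb : -(c₀ / 2 * s) ≤ R T ω := by
          have := abs_le.mp hcon
          linarith [this.1]
        have hbm := hR1 T ω
        have h2 : c₀ / 2 * s ≤ betweenMin (dh T ω) (G T) := by
          have : c₀ / 2 * s ≤ c₀ * s + R T ω := by nlinarith
          linarith
        simp only [Set.mem_setOf_eq] at hω
        linarith
      have h2 := hR2 (c₀ / 2) (half_pos hc₀)
      refine tendsto_of_tendsto_of_tendsto_of_le_of_le'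
        (tendsto_const_nhds (x := (0 : ENNReal))) h2
        (Filter.Eventually.of_forall (fun T => zero_le)) ?_
      filter_upwards [hev] with T hT
      exact measure_mono hT
    refine main (fun T => {ω | π T < withinMax (dh T ω) (G T)} ∪
      {ω | betweenMin (dh T ω) (G T) ≤ π T}) ?_ ?_
    · intro T ω hω Qc hQc
      have hω1 : ¬ π T < withinMax (dh T ω) (G T) := fun h => hω (Or.inl h)
      have hω2 : ¬ betweenMin (dh T ω) (G T) ≤ π T := fun h => hω (Or.inr h)
      exact key T ω (not_lt.mp hω1) (fun k k' _ => not_le.mp hω2) Qc hQc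
    · have hsum := hA0.add hB0
      simp only [add_zero] at hsum
      refine tendsto_of_tendsto_of_tendsto_of_le_of_le
        (tendsto_const_nhds (x := (0 : ENNReal))) hsum
        (fun T => zero_le) ?_
      intro T
      exact measure_union_le _ _
end
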